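/- arXiv:math/0401224 — 4 statements merged into one kernel-verified Lean document; each statement's English description precedes it below -/
import Mathlib

section
/- Let X and Y be distinct length-n ternary strings over {1,2,3} with X < Y in the snake ordering, where n ≥ 3, and suppose Y ≠ (1,...,1), (2,...,2), (3,...,3) and X ≠ (1,...,1), (2,...,2), (3,...,3). Then there exists a string Z < Y (in the snake ordering), Z not equal to any constant string, such that Z differs from Y in exactly one coordinate, and every coordinate where X agrees with Y is a coordinate where Z agrees with Y. -/
/-- The snake ordering on ternary strings. -/
def snakeLt : List ℕ → List ℕ → Prop
  | a :: x, b :: y =>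
      a < b ∨ (a = b ∧ if a % 2 = 1 then snakeLt x y else snakeLt y x)
  | _, _ => False
termination_by x y => x.length + y.length
decreasing_by all_goals simp [List.length_cons]; omega

def E (l : List ℕ) : ℕ := l.countP (fun a => a % 2 = 0)

theorem snakeLt_iff (n : ℕ) : ∀ (x y : List ℕ), x.length = n → y.length = n →
    (snakeLt x y ↔ ∃ i < n, x.take i = y.take i ∧
      (if E (x.take i) % 2 = 0 then x.getD i 0 < y.getD i 0 else y.getD i 0 < x.getD i 0)) := by
  induction n with
  | zero =>
    intro x y hx hy
    rw [List.length_eq_zero_iff] at hx hy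
    subst hx; subst hy
    simp [snakeLt]
  | succ n ih =>
    intro x y hx hy
    rcases x with _ | ⟨a, x'⟩; · simp at hx
    rcases y with _ | ⟨b, y'⟩; · simp at hy
    simp only [List.length_cons, Nat.succ.injEq] at hx hy
    rw [snakeLt]
    constructor
    · rintro (hab | ⟨rfl, h⟩)
      · exact ⟨0, Nat.succ_pos n, by simp, by simp [E]; omega⟩
      · by_cases ha : a % 2 = 1
        · rw [if_pos ha] at h
          obtain ⟨j, hj, htake, hcond⟩ := (ih x' y' hx hy).mp h
          refine ⟨j + 1, by omega, by simp [htake], ?_⟩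
          have : E (a :: x'.take j) = E (x'.take j) := by
            simp [E, List.countP_cons]; omega
          simpa [List.take_succ_cons, this, List.getD_cons_succ] using hcond
        · rw [if_neg ha] at h
          obtain ⟨j, hj, htake, hcond⟩ := (ih y' x' hy hx).mp h
          refine ⟨j + 1, by omega, by simp [htake.symm], ?_⟩
          have hE : E (a :: x'.take j) = E (y'.take j) + 1 := by
            rw [← htake]; simp [E, List.countP_cons]; omega
          simp only [List.take_succ_cons, hE, List.getD_cons_succ]
          split at hcond <;> split <;> omega
    · rintro ⟨i, hi, htake, hcond⟩
      rcases i with _ | j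
      · left; simpa [E] using hcond
      · simp only [List.take_succ_cons, List.cons.injEq] at htake
        obtain ⟨rfl, htake⟩ := htake
        right; refine ⟨rfl, ?_⟩
        by_cases ha : a % 2 = 1
        · rw [if_pos ha]
          refine (ih x' y' hx hy).mpr ⟨j, by omega, htake, ?_⟩
          have : E (a :: x'.take j) = E (x'.take j) := by
            simp [E, List.countP_cons]; omega
          simpa [this, List.getD_cons_succ] using hcond
        · rw [if_neg ha]
          refine (ih y' x' hy hx).mpr ⟨j, by omega, htake.symm, ?_⟩
          have hE : E (a :: x'.take j) = E (y'.take j) + 1 := by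
            rw [htake]; simp [E, List.countP_cons]; omega
          simp only [List.take_succ_cons, hE, List.getD_cons_succ] at hcond
          split at hcond <;> split <;> omega

lemma getD_ofFn {n : ℕ} (f : Fin n → ℕ) (i : ℕ) (h : i < n) :
    (List.ofFn f).getD i 0 = f ⟨i, h⟩ := by
  rw [List.getD_eq_getElem _ _ (by simpa using h)]
  simp

lemma take_ofFn_eq {n : ℕ} (f g : Fin n → ℕ) (i : ℕ)
    (h : ∀ j : Fin n, (j : ℕ) < i → f j = g j) :
    (List.ofFn f).take i = (List.ofFn g).take i := by
  apply List.ext_getElem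
  · simp
  · intro m h1 h2
    simp only [List.length_take, List.length_ofFn, lt_min_iff] at h1
    rw [List.getElem_take, List.getElem_take, List.getElem_ofFn, List.getElem_ofFn]
    exact h ⟨m, h1.2⟩ h1.1

lemma take_ofFn_agree {n : ℕ} (f g : Fin n → ℕ) (i : ℕ)
    (h : (List.ofFn f).take i = (List.ofFn g).take i) (j : Fin n) (hj : (j : ℕ) < i) :
    f j = g j := by
  have h1 : (j : ℕ) < ((List.ofFn f).take i).length := by simp; omega
  have h2 : (j : ℕ) < ((List.ofFn g).take i).length := by simp; omega
  have := List.getElem_of_eq h h1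
  rw [List.getElem_take, List.getElem_take, List.getElem_ofFn, List.getElem_ofFn] at this
  simpa using this

lemma E_take_ofFn {n : ℕ} (f : Fin n → ℕ) (m : ℕ) (hm : m ≤ n) :
    E ((List.ofFn f).take m) =
      ((Finset.range m).filter (fun j => (if h : j < n then f ⟨j, h⟩ else 1) % 2 = 0)).card := by
  induction m with
  | zero => simp [E]
  | succ m ih =>
    have hmn : m < n := hm
    have hlen : m < (List.ofFn f).length := by simpa using hmn
    rw [List.take_succ, List.getElem?_eq_getElem hlen]
    have : E ((List.ofFn f).take m ++ [(List.ofFn f)[m]]) =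
        E ((List.ofFn f).take m) + (if (List.ofFn f)[m] % 2 = 0 then 1 else 0) := by
      simp [E, List.countP_append, List.countP_cons, List.countP_nil]
    rw [Option.toList_some, this, ih (by omega), Finset.range_add_one, Finset.filter_insert]
    rw [List.getElem_ofFn]
    rw [dif_pos hmn]
    by_cases hp : f ⟨m, hmn⟩ % 2 = 0
    · rw [if_pos hp, if_pos hp, Finset.card_insert_of_notMem (by simp)]
    · rw [if_neg hp, if_neg hp, Nat.add_zero]

/-- Key shelling lemma for `T_{3,n}`: if `X < Y` in the snake ordering are nonconstant
length-`n` ternary strings (`n ≥ 3`), there is a nonconstant string `Z < Y` that differs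
from `Y` in exactly one coordinate, and agrees with `Y` wherever `X` does. -/
theorem snake_shelling_lemma (n : ℕ) (hn : 3 ≤ n) (X Y : Fin n → ℕ)
    (hX : ∀ j, X j = 1 ∨ X j = 2 ∨ X j = 3) (hY : ∀ j, Y j = 1 ∨ Y j = 2 ∨ Y j = 3)
    (hXne : ¬ ∃ c, ∀ j, X j = c) (hYne : ¬ ∃ c, ∀ j, Y j = c)
    (hlt : snakeLt (List.ofFn X) (List.ofFn Y)) :
    ∃ Z : Fin n → ℕ,
      (∀ j, Z j = 1 ∨ Z j = 2 ∨ Z j = 3) ∧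
      (¬ ∃ c, ∀ j, Z j = c) ∧
      snakeLt (List.ofFn Z) (List.ofFn Y) ∧
      (∃ i : Fin n, Z i ≠ Y i ∧ ∀ j, j ≠ i → Z j = Y j) ∧
      (∀ j, X j = Y j → Z j = Y j) := by
  have hex2 : ∀ a b : Fin n, ∃ j : Fin n, j ≠ a ∧ j ≠ b := by
    intro a b
    by_contra h
    push_neg at h
    have hsub : (Finset.univ : Finset (Fin n)) ⊆ {a, b} := by
      intro j _
      simp only [Finset.mem_insert, Finset.mem_singleton]
      by_cases hja : j = a
      · exact Or.inl hja
      · exact Or.inr (h j hja)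
    have h1 : (Finset.univ : Finset (Fin n)).card ≤ ({a, b} : Finset (Fin n)).card :=
      Finset.card_le_card hsub
    have h2 : ({a, b} : Finset (Fin n)).card ≤ 2 :=
      le_trans (Finset.card_insert_le _ _) (by simp)
    simp [Finset.card_univ] at h1
    omega
  obtain ⟨i, hi, htake, hcond⟩ :=
    (snakeLt_iff n (List.ofFn X) (List.ofFn Y) (by simp) (by simp)).mp hlt
  set ii : Fin n := ⟨i, hi⟩ with hii
  have hagree : ∀ j : Fin n, (j : ℕ) < i → X j = Y j := take_ofFn_agree X Y i htake
  rw [getD_ofFn X i hi, getD_ofFn Y i hi] at hcond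
  have hdiff : X ii ≠ Y ii := by
    intro h; rw [← hii] at hcond; rw [h] at hcond; split at hcond <;> omega
  by_cases hdeg : ∀ j : Fin n, j ≠ ii → Y j = X ii
  case neg =>
    -- non-degenerate case: set Z = Y except Z ii = X ii
    push_neg at hdeg
    obtain ⟨k, hk, hYk⟩ := hdeg
    refine ⟨fun j => if j = ii then X ii else Y j, ?_, ?_, ?_, ?_, ?_⟩
    · intro j
      by_cases h : j = ii
      · simp only [if_pos h]; exact hX ii
      · simp only [if_neg h]; exact hY j
    · rintro ⟨c, hc⟩
      have h1 := hc ii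
      have h2 := hc k
      simp only [if_pos rfl] at h1
      simp only [if_neg hk] at h2
      exact hYk (h2.trans h1.symm)
    · refine (snakeLt_iff n _ _ (by simp) (by simp)).mpr ⟨i, hi, ?_, ?_⟩
      · apply take_ofFn_eq
        intro j hj
        have : j ≠ ii := by
          intro h; rw [h] at hj; simp [hii] at hj
        simp only [if_neg this]
      · have hEq : (List.ofFn (fun j => if j = ii then X ii else Y j)).take i
            = (List.ofFn X).take i := by
          refine Eq.trans ?_ htake.symm
          apply take_ofFn_eq
          intro j hj
          have : j ≠ ii := by
            intro h; rw [h] at hj; simp [hii] at hj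
          simp only [if_neg this]
        rw [hEq, getD_ofFn _ i hi, getD_ofFn Y i hi]
        simp only [← hii, if_pos rfl]
        exact hcond
    · refine ⟨ii, ?_, ?_⟩
      · simp only [if_pos rfl]; exact hdiff
      · intro j hj; simp only [if_neg hj]
    · intro j hXY
      have : j ≠ ii := by intro h; rw [h] at hXY; exact hdiff hXY
      simp only [if_neg this]
  case pos =>
    -- degenerate: Y j = X ii for all j ≠ ii
    -- generic "Option A" construction: change Y at ii to value v
    have mainA : ∀ v : ℕ, (v = 1 ∨ v = 2 ∨ v = 3) → v ≠ X ii → v ≠ Y ii →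
        (if E ((List.ofFn X).take i) % 2 = 0 then v < Y ii else Y ii < v) →
        ∃ Z : Fin n → ℕ,
          (∀ j, Z j = 1 ∨ Z j = 2 ∨ Z j = 3) ∧
          (¬ ∃ c, ∀ j, Z j = c) ∧
          snakeLt (List.ofFn Z) (List.ofFn Y) ∧
          (∃ i : Fin n, Z i ≠ Y i ∧ ∀ j, j ≠ i → Z j = Y j) ∧
          (∀ j, X j = Y j → Z j = Y j) := by
      intro v hv1 hv2 hv3 hv4
      refine ⟨fun j => if j = ii then v else Y j, ?_, ?_, ?_, ?_, ?_⟩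
      · intro j
        by_cases h : j = ii
        · simp only [if_pos h]; exact hv1
        · simp only [if_neg h]; exact hY j
      · rintro ⟨c, hc⟩
        obtain ⟨j₀, hj₀, -⟩ := hex2 ii ii
        have h1 := hc ii
        have h2 := hc j₀
        simp only [if_pos rfl] at h1
        simp only [if_neg hj₀] at h2
        rw [hdeg j₀ hj₀] at h2
        exact hv2 (h1.trans h2.symm)
      · refine (snakeLt_iff n _ _ (by simp) (by simp)).mpr ⟨i, hi, ?_, ?_⟩
        · apply take_ofFn_eq
          intro j hj
          have : j ≠ ii := by
            intro h; rw [h] at hj; simp [hii] at hj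
          simp only [if_neg this]
        · have hEq : (List.ofFn (fun j => if j = ii then v else Y j)).take i
              = (List.ofFn X).take i := by
            refine Eq.trans ?_ htake.symm
            apply take_ofFn_eq
            intro j hj
            have hji : j ≠ ii := by
              intro h; rw [h] at hj; simp [hii] at hj
            rw [if_neg hji]
          rw [hEq, getD_ofFn _ i hi, getD_ofFn Y i hi]
          simp only [← hii, if_pos rfl]
          exact hv4
      · refine ⟨ii, ?_, ?_⟩
        · simp only [if_pos rfl]; exact hv3
        · intro j hj; simp only [if_neg hj]
      · intro j hXY
        have : j ≠ ii := by intro h; rw [h] at hXY; exact hdiff hXY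
        simp only [if_neg this]
    rcases hX ii with hc | hc | hc <;> rcases hY ii with hd | hd | hd
    · exact absurd (hc.trans hd.symm) hdiff
    · -- c = 1, d = 2 : Option B, change Y at some k > i to 3
      push_neg at hXne
      obtain ⟨k, hk⟩ := hXne 1
      have hkii : k ≠ ii := by intro h; rw [h, hc] at hk; exact hk rfl
      have hYkval : Y k = 1 := by rw [hdeg k hkii, hc]
      have hik : i < (k : ℕ) := by
        rcases lt_trichotomy (k : ℕ) i with h | h | h
        · exact absurd ((hagree k h).trans hYkval) hk
        · exact absurd (Fin.ext h) hkii
        · exact h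
      set Z : Fin n → ℕ := fun j => if j = k then 3 else Y j with hZ
      have hiik : ii ≠ k := Ne.symm hkii
      obtain ⟨j₀, hj₀i, hj₀k⟩ := hex2 ii k
      refine ⟨Z, ?_, ?_, ?_, ?_, ?_⟩
      · intro j
        by_cases h : j = k
        · simp [hZ, if_pos h]
        · simp only [hZ, if_neg h]; exact hY j
      · rintro ⟨c, hcc⟩
        have h1 := hcc ii
        have h2 := hcc j₀
        simp only [hZ, if_neg hiik] at h1
        simp only [hZ, if_neg hj₀k] at h2
        rw [hd] at h1
        rw [hdeg j₀ hj₀i, hc] at h2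
        omega
      · refine (snakeLt_iff n _ _ (by simp) (by simp)).mpr ⟨(k : ℕ), k.isLt, ?_, ?_⟩
        · apply take_ofFn_eq
          intro j hj
          have : j ≠ k := by intro h; rw [h] at hj; omega
          simp only [hZ, if_neg this]
        · have hfilter : (Finset.range (k : ℕ)).filter
              (fun j => (if h : j < n then Z ⟨j, h⟩ else 1) % 2 = 0) = {i} := by
            ext j
            simp only [Finset.mem_filter, Finset.mem_range, Finset.mem_singleton]
            constructor
            · rintro ⟨hjk, hj⟩
              have hjn : j < n := hjk.trans k.isLt
              rw [dif_pos hjn] at hj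
              by_contra hne
              have h1 : (⟨j, hjn⟩ : Fin n) ≠ k := by
                intro h; have := congrArg Fin.val h; simp at this; omega
              have h2 : (⟨j, hjn⟩ : Fin n) ≠ ii := by
                intro h; have := congrArg Fin.val h; simp [hii] at this; exact hne this
              rw [hZ] at hj
              simp only [if_neg h1] at hj
              rw [hdeg _ h2, hc] at hj
              omega
            · intro hj
              rw [hj]
              refine ⟨hik, ?_⟩
              rw [dif_pos hi]
              have hthis : (⟨i, hi⟩ : Fin n) = ii := rfl
              rw [hthis, hZ]
              simp only [if_neg hiik]
              rw [hd]
            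
          rw [E_take_ofFn Z (k : ℕ) k.isLt.le, hfilter]
          simp only [Finset.card_singleton]
          rw [if_neg (by omega)]
          rw [getD_ofFn Y (k : ℕ) k.isLt, getD_ofFn Z (k : ℕ) k.isLt]
          have hkk : (⟨(k : ℕ), k.isLt⟩ : Fin n) = k := Fin.ext rfl
          rw [hkk]
          simp [hZ, hYkval]
      · refine ⟨k, ?_, ?_⟩
        · simp only [hZ, if_pos rfl]; rw [hYkval]; omega
        · intro j hj; simp only [hZ, if_neg hj]
      · intro j hXY
        have : j ≠ k := by intro h; rw [h] at hXY; rw [hYkval] at hXY; exact hk hXY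
        simp only [hZ, if_neg this]
    · -- c = 1, d = 3 : v = 2
      refine mainA 2 (by omega) (by omega) (by omega) ?_
      by_cases hp : E ((List.ofFn X).take i) % 2 = 0
      · rw [if_pos hp]; omega
      · rw [if_neg hp] at hcond; rw [hc, hd] at hcond; omega
    · -- c = 2, d = 1 : v = 3
      refine mainA 3 (by omega) (by omega) (by omega) ?_
      by_cases hp : E ((List.ofFn X).take i) % 2 = 0
      · rw [if_pos hp] at hcond; rw [hc, hd] at hcond; omega
      · rw [if_neg hp]; omega
    · exact absurd (hc.trans hd.symm) hdiff
    · -- c = 2, d = 3 : v = 1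
      refine mainA 1 (by omega) (by omega) (by omega) ?_
      by_cases hp : E ((List.ofFn X).take i) % 2 = 0
      · rw [if_pos hp]; omega
      · rw [if_neg hp] at hcond; rw [hc, hd] at hcond; omega
    · -- c = 3, d = 1 : impossible
      exfalso
      have hE0 : E ((List.ofFn X).take i) = 0 := by
        rw [E_take_ofFn X i hi.le]
        rw [Finset.card_eq_zero, Finset.filter_eq_empty_iff]
        intro j hj
        rw [Finset.mem_range] at hj
        have hjn : j < n := hj.trans hi
        rw [dif_pos hjn]
        have hji : (⟨j, hjn⟩ : Fin n) ≠ ii := by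
          intro h; have := congrArg Fin.val h; simp [hii] at this; omega
        rw [hagree ⟨j, hjn⟩ hj, hdeg _ hji, hc]
        omega
      rw [if_pos (by rw [hE0])] at hcond
      rw [hc, hd] at hcond
      omega
    · -- c = 3, d = 2 : impossible
      exfalso
      have hE0 : E ((List.ofFn X).take i) = 0 := by
        rw [E_take_ofFn X i hi.le]
        rw [Finset.card_eq_zero, Finset.filter_eq_empty_iff]
        intro j hj
        rw [Finset.mem_range] at hj
        have hjn : j < n := hj.trans hi
        rw [dif_pos hjn]
        have hji : (⟨j, hjn⟩ : Fin n) ≠ ii := by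
          intro h; have := congrArg Fin.val h; simp [hii] at this; omega
        rw [hagree ⟨j, hjn⟩ hj, hdeg _ hji, hc]
        omega
      rw [if_pos (by rw [hE0])] at hcond
      rw [hc, hd] at hcond
      omega
    · exact absurd (hc.trans hd.symm) hdiff
end

section
/- For n ≥ 2, the simplicial complex T_{3,n} is shellable: the snake ordering on its facets (non-constant ternary strings of length n) is a shelling order. -/
/-- The facet of `T_{3,n}` corresponding to a ternary string `s`, as a set of vertices
`(j, s j)` in `{1,...,n} × {1,2,3}`. -/
def facet {n : ℕ} (s : Fin n → ℕ) : Finset (Fin n × ℕ) :=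
  Finset.univ.image fun j => (j, s j)

/-- A facet of `T_{3,n}`: a nonconstant ternary string of length `n`. -/
def IsFacet {n : ℕ} (s : Fin n → ℕ) : Prop :=
  (∀ j, s j = 1 ∨ s j = 2 ∨ s j = 3) ∧ ¬ ∃ c, ∀ j, s j = c

lemma snakeLt_cons (a b : ℕ) (x y : List ℕ) :
    snakeLt (a :: x) (b :: y) ↔
      a < b ∨ (a = b ∧ if a % 2 = 1 then snakeLt x y else snakeLt y x) := by
  rw [snakeLt]

lemma snakeLt_irrefl : ∀ l : List ℕ, ¬ snakeLt l l
  | [] => by simp [snakeLt]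
  | a :: l => by
    rw [snakeLt_cons]
    rintro (h | ⟨-, h⟩)
    · omega
    · split at h <;> exact snakeLt_irrefl l h

/-- The number of even entries of `Y` at positions below `m`. -/
def evens {n : ℕ} (Y : Fin n → ℕ) (m : ℕ) : ℕ :=
  (Finset.univ.filter (fun j : Fin n => (j : ℕ) < m ∧ Y j % 2 = 0)).card

lemma evens_congr {n} {X Y : Fin n → ℕ} {m : ℕ} (h : ∀ j : Fin n, (j:ℕ) < m → X j = Y j) :
    evens X m = evens Y m := by
  unfold evens
  congr 1
  apply Finset.filter_congr
  intro j _
  by_cases hj : (j:ℕ) < m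
  · simp [hj, h j hj]
  · simp [hj]

lemma evens_succ {n} (Y : Fin (n+1) → ℕ) (m : ℕ) :
    evens Y (m+1) = (if Y 0 % 2 = 0 then 1 else 0) + evens (fun i : Fin n => Y i.succ) m := by
  unfold evens
  rw [Finset.card_filter, Finset.card_filter, Fin.sum_univ_succ]
  congr 1
  · simp
  · apply Finset.sum_congr rfl
    intro j _
    have hv : ((Fin.succ j : Fin (n+1)) : ℕ) = (j:ℕ) + 1 := rfl
    simp only [hv]
    congr 1
    simp [Nat.succ_lt_succ_iff]

/-- The key comparison lemma: if `X` and `Y` agree below position `m` and differ at `m`,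
then `snakeLt (ofFn X) (ofFn Y)` is decided at position `m`, in a direction governed by
the parity of the number of even entries of `Y` below `m`. -/
lemma keyF : ∀ (n : ℕ) (X Y : Fin n → ℕ) (m : ℕ) (hm : m < n),
    (∀ j : Fin n, (j:ℕ) < m → X j = Y j) → X ⟨m, hm⟩ ≠ Y ⟨m, hm⟩ →
    (snakeLt (List.ofFn X) (List.ofFn Y) ↔
      if evens Y m % 2 = 0 then X ⟨m, hm⟩ < Y ⟨m, hm⟩ else Y ⟨m, hm⟩ < X ⟨m, hm⟩)
  | 0, _, _, m, hm => by omega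
  | n+1, X, Y, m, hm => by
    intro hpre hne
    rw [List.ofFn_succ, List.ofFn_succ, snakeLt_cons]
    cases m with
    | zero =>
      have he : evens Y 0 = 0 := by unfold evens; simp
      rw [he]
      have h00 : (0:ℕ) % 2 = 0 := rfl
      rw [if_pos h00]
      constructor
      · rintro (h | ⟨h, -⟩)
        · exact h
        · exact absurd h hne
      · intro h; exact Or.inl h
    | succ m' =>
      have hm' : m' < n := by omega
      have h0 : X 0 = Y 0 := hpre 0 (by simp)
      set Xs : Fin n → ℕ := fun i => X i.succ with hXs
      set Ys : Fin n → ℕ := fun i => Y i.succ with hYs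
      have hpre' : ∀ j : Fin n, (j:ℕ) < m' → Xs j = Ys j := by
        intro j hj
        have hv : ((Fin.succ j : Fin (n+1)) : ℕ) = (j:ℕ) + 1 := rfl
        exact hpre (Fin.succ j) (by omega)
      have hne' : Xs ⟨m', hm'⟩ ≠ Ys ⟨m', hm'⟩ := hne
      have IH1 := keyF n Xs Ys m' hm' hpre' hne'
      have IH2 := keyF n Ys Xs m' hm' (fun j hj => (hpre' j hj).symm) (Ne.symm hne')
      have hevX : evens Xs m' = evens Ys m' := evens_congr hpre'
      rw [hevX] at IH2
      rw [evens_succ, h0]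
      simp only [← hYs]
      have hXp : X ⟨m'+1, hm⟩ = Xs ⟨m', hm'⟩ := rfl
      have hYp : Y ⟨m'+1, hm⟩ = Ys ⟨m', hm'⟩ := rfl
      rw [hXp, hYp]
      by_cases hpar : Y 0 % 2 = 1
      · rw [if_pos hpar, if_neg (show ¬ (Y 0 % 2 = 0) by omega), Nat.zero_add]
        simp only [lt_irrefl, false_or, true_and]
        exact IH1
      · have h2 : Y 0 % 2 = 0 := by omega
        rw [if_neg hpar, if_pos h2]
        simp only [lt_irrefl, false_or, true_and]
        rw [IH2]
        by_cases he : evens Ys m' % 2 = 0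
        · rw [if_pos he, if_neg (by omega)]
        · rw [if_neg he, if_pos (by omega)]

lemma mem_facet {n} (s : Fin n → ℕ) (p : Fin n × ℕ) : p ∈ facet s ↔ s p.1 = p.2 := by
  obtain ⟨a, b⟩ := p
  simp only [facet, Finset.mem_image, Finset.mem_univ, true_and, Prod.mk.injEq]
  constructor
  · rintro ⟨j, rfl, rfl⟩; rfl
  · rintro rfl; exact ⟨a, rfl, rfl⟩

lemma conclude {n : ℕ} (X Y : Fin n → ℕ) (i : Fin n) (v : ℕ)
    (hXi : X i ≠ Y i) (hvne : v ≠ Y i)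
    (hF : IsFacet (Function.update Y i v))
    (hS : snakeLt (List.ofFn (Function.update Y i v)) (List.ofFn Y)) :
    ∃ Z : Fin n → ℕ, IsFacet Z ∧ snakeLt (List.ofFn Z) (List.ofFn Y) ∧
      (facet Z ∩ facet Y).card = n - 1 ∧
      facet X ∩ facet Y ⊆ facet Z ∩ facet Y := by
  set Z := Function.update Y i v with hZ
  refine ⟨Z, hF, hS, ?_, ?_⟩
  · have himg : facet Z ∩ facet Y = (Finset.univ.erase i).image (fun j => (j, Y j)) := by
      ext ⟨a, b⟩
      simp only [Finset.mem_inter, mem_facet, Finset.mem_image, Finset.mem_erase,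
        Finset.mem_univ, and_true]
      constructor
      · rintro ⟨hZa, hYa⟩
        refine ⟨a, ?_, by rw [hYa]⟩
        rintro rfl
        rw [hZ, Function.update_self] at hZa
        exact hvne (hZa.trans hYa.symm)
      · rintro ⟨j, hj, heq⟩
        obtain ⟨rfl, rfl⟩ : j = a ∧ Y j = b := by
          simpa [Prod.ext_iff] using heq
        exact ⟨Function.update_of_ne hj v Y, rfl⟩
    rw [himg, Finset.card_image_of_injective _ (fun j k h => (Prod.ext_iff.mp h).1),
      Finset.card_erase_of_mem (Finset.mem_univ i), Finset.card_univ, Fintype.card_fin]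
  · rintro ⟨a, b⟩ hp
    rw [Finset.mem_inter, mem_facet, mem_facet] at hp ⊢
    obtain ⟨hXa, hYa⟩ := hp
    have hai : a ≠ i := by
      rintro rfl
      exact hXi (hXa.trans hYa.symm)
    exact ⟨(Function.update_of_ne hai v Y).trans hYa, hYa⟩

lemma build {n : ℕ} (X Y : Fin n → ℕ) (hY3 : ∀ j, Y j = 1 ∨ Y j = 2 ∨ Y j = 3)
    (i : Fin n) (v : ℕ) (hv3 : v = 1 ∨ v = 2 ∨ v = 3)
    (hXi : X i ≠ Y i) (hvne : v ≠ Y i)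
    (hdir : if evens Y (i:ℕ) % 2 = 0 then v < Y i else Y i < v)
    (j₀ : Fin n) (hj₀ : j₀ ≠ i) (hj₀v : Y j₀ ≠ v) :
    ∃ Z : Fin n → ℕ, IsFacet Z ∧ snakeLt (List.ofFn Z) (List.ofFn Y) ∧
      (facet Z ∩ facet Y).card = n - 1 ∧
      facet X ∩ facet Y ⊆ facet Z ∩ facet Y := by
  apply conclude X Y i v hXi hvne
  · constructor
    · intro j
      by_cases hj : j = i
      · subst hj; rw [Function.update_self]; exact hv3
      · rw [Function.update_of_ne hj]; exact hY3 j
    · rintro ⟨c, hc⟩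
      have h1 := hc j₀
      have h2 := hc i
      rw [Function.update_of_ne hj₀] at h1
      rw [Function.update_self] at h2
      exact hj₀v (h1.trans h2.symm)
  · have hpreZ : ∀ j : Fin n, (j:ℕ) < (i:ℕ) → Function.update Y i v j = Y j := by
      intro j hj
      exact Function.update_of_ne (Fin.ne_of_val_ne (Nat.ne_of_lt hj)) v Y
    have hieta : (⟨(i:ℕ), i.2⟩ : Fin n) = i := rfl
    have hneZ : Function.update Y i v ⟨(i:ℕ), i.2⟩ ≠ Y ⟨(i:ℕ), i.2⟩ := by
      rw [hieta, Function.update_self]; exact hvne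
    rw [keyF n (Function.update Y i v) Y (i:ℕ) i.2 hpreZ hneZ, hieta,
      Function.update_self]
    exact hdir

/-- Shellability of `T_{3,n}` for `n ≥ 2`: the snake ordering on its facets (nonconstant
ternary strings of length `n`) is a shelling order.  That is, for facets `X < Y` there is
a facet `Z < Y` such that `Δ_Z ∩ Δ_Y` is a codimension-one face of `Δ_Y` containing
`Δ_X ∩ Δ_Y`. -/
theorem T3n_shellable (n : ℕ) (hn : 2 ≤ n) (X Y : Fin n → ℕ)
    (hX : IsFacet X) (hY : IsFacet Y)
    (hlt : snakeLt (List.ofFn X) (List.ofFn Y)) :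
    ∃ Z : Fin n → ℕ, IsFacet Z ∧ snakeLt (List.ofFn Z) (List.ofFn Y) ∧
      (facet Z ∩ facet Y).card = n - 1 ∧
      facet X ∩ facet Y ⊆ facet Z ∩ facet Y := by
  have hX3 := hX.1
  have hY3 := hY.1
  -- a least index of disagreement
  have hne : ∃ j, X j ≠ Y j := by
    by_contra h
    push_neg at h
    rw [show X = Y from funext h] at hlt
    exact snakeLt_irrefl _ hlt
  set S : Finset (Fin n) := Finset.univ.filter (fun j => X j ≠ Y j) with hSdef
  have hSne : S.Nonempty := by
    obtain ⟨j, hj⟩ := hne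
    exact ⟨j, by simp [hSdef, hj]⟩
  set i := S.min' hSne with hidef
  have hXi : X i ≠ Y i := by
    have := S.min'_mem hSne
    simpa [hSdef] using this
  have hpre : ∀ j : Fin n, (j:ℕ) < (i:ℕ) → X j = Y j := by
    intro j hj
    by_contra hne'
    have hji : i ≤ j := S.min'_le j (by simp [hSdef, hne'])
    rw [Fin.le_def] at hji
    omega
  have hieta : (⟨(i:ℕ), i.2⟩ : Fin n) = i := rfl
  have hcmp := (keyF n X Y (i:ℕ) i.2 hpre (by rw [hieta]; exact hXi)).mp hlt
  rw [hieta] at hcmp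
  obtain ⟨j₂, hj₂⟩ := Fintype.exists_ne_of_one_lt_card
    (by rw [Fintype.card_fin]; omega) i
  by_cases hE : evens Y (i:ℕ) % 2 = 0
  · rw [if_pos hE] at hcmp
    rcases hY3 i with hYi | hYi | hYi
    · exfalso; have := hX3 i; omega
    · -- Y i = 2, so X i = 1
      by_cases hc : ∀ j, j ≠ i → Y j = 1
      · -- bad case: modify at a later coordinate j'
        have hXall : ¬ ∀ j, X j = 1 := fun h => hX.2 ⟨1, h⟩
        push_neg at hXall
        obtain ⟨j', hj'⟩ := hXall
        have hXi1 : X i = 1 := by have := hX3 i; omega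
        have hj'i : j' ≠ i := fun h => hj' (h ▸ hXi1)
        have hYj' : Y j' = 1 := hc j' hj'i
        have hXYj' : X j' ≠ Y j' := by rw [hYj']; exact hj'
        have hij' : (i:ℕ) < (j':ℕ) := by
          have h1 : i ≤ j' := S.min'_le j' (by simp [hSdef, hXYj'])
          rw [Fin.le_def] at h1
          have h2 : (i:ℕ) ≠ (j':ℕ) := fun h => hj'i (Fin.ext h.symm)
          omega
        have hev : evens Y (j':ℕ) = 1 := by
          unfold evens
          have hfil : Finset.univ.filter
              (fun j : Fin n => (j:ℕ) < (j':ℕ) ∧ Y j % 2 = 0) = {i} := by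
            ext j
            simp only [Finset.mem_filter, Finset.mem_univ, true_and, Finset.mem_singleton]
            constructor
            · rintro ⟨h1, h2⟩
              by_contra hji
              rw [hc j hji] at h2
              omega
            · rintro rfl
              exact ⟨hij', by rw [hYi]⟩
          rw [hfil, Finset.card_singleton]
        apply build X Y hY3 j' 3 (Or.inr (Or.inr rfl)) hXYj'
          (by rw [hYj']; omega)
          (by rw [hev, if_neg (by omega), hYj']; omega)
          i (Ne.symm hj'i) (by rw [hYi]; omega)
      · push_neg at hc
        obtain ⟨j₀, hj₀i, hj₀1⟩ := hc
        apply build X Y hY3 i 1 (Or.inl rfl) hXi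
          (by rw [hYi]; omega)
          (by rw [if_pos hE, hYi]; omega)
          j₀ hj₀i hj₀1
    · -- Y i = 3
      by_cases hc : ∀ j, j ≠ i → Y j = 1
      · apply build X Y hY3 i 2 (Or.inr (Or.inl rfl)) hXi
          (by rw [hYi]; omega)
          (by rw [if_pos hE, hYi]; omega)
          j₂ hj₂ (by rw [hc j₂ hj₂]; omega)
      · push_neg at hc
        obtain ⟨j₀, hj₀i, hj₀1⟩ := hc
        apply build X Y hY3 i 1 (Or.inl rfl) hXi
          (by rw [hYi]; omega)
          (by rw [if_pos hE, hYi]; omega)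
          j₀ hj₀i hj₀1
  · rw [if_neg hE] at hcmp
    rcases hY3 i with hYi | hYi | hYi
    · -- Y i = 1
      by_cases hc : ∀ j, j ≠ i → Y j = 2
      · apply build X Y hY3 i 3 (Or.inr (Or.inr rfl)) hXi
          (by rw [hYi]; omega)
          (by rw [if_neg hE, hYi]; omega)
          j₂ hj₂ (by rw [hc j₂ hj₂]; omega)
      · push_neg at hc
        obtain ⟨j₀, hj₀i, hj₀2⟩ := hc
        apply build X Y hY3 i 2 (Or.inr (Or.inl rfl)) hXi
          (by rw [hYi]; omega)
          (by rw [if_neg hE, hYi]; omega)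
          j₀ hj₀i hj₀2
    · -- Y i = 2
      by_cases hc : ∀ j, j ≠ i → Y j = 3
      · exfalso
        apply hE
        have hfil : Finset.univ.filter
            (fun j : Fin n => (j:ℕ) < (i:ℕ) ∧ Y j % 2 = 0) = ∅ := by
          ext j
          simp only [Finset.mem_filter, Finset.mem_univ, true_and,
            Finset.notMem_empty, iff_false]
          rintro ⟨h1, h2⟩
          have hji : j ≠ i := Fin.ne_of_val_ne (by omega)
          rw [hc j hji] at h2
          omega
        unfold evens
        rw [hfil]
        simp
      · push_neg at hc
        obtain ⟨j₀, hj₀i, hj₀3⟩ := hc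
        apply build X Y hY3 i 3 (Or.inr (Or.inr rfl)) hXi
          (by rw [hYi]; omega)
          (by rw [if_neg hE, hYi]; omega)
          j₀ hj₀i hj₀3
    · exfalso; have := hX3 i; omega
end

section
/- In the chain complex of the simplicial complex C_{1,2} (faces: length-n strings over {0,1,2} that are not (1,...,1) or (2,...,2), with face Δ_X having vertices (j,X_j) for X_j ≠ 0), the boundary of the (n-1)-chain Σ_F sgn(F)·F, where the sum is over all facets F (nonconstant strings over {1,2}) and sgn(F) = (-1)^{#1's in F}, equals [1] + (-1)^n [2], where [1] = Σ_{j=1}^n (-1)^j Δ_{X^j} with X^j the string with 0 in position j and 1 elsewhere, and [2] is defined analogously with 2's. -/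
/-! Boundary computation in the chain complex of `C_{1,2}`.  Faces are encoded as strings
`Fin n → Option (Fin 2)`, where the symbols `1` and `2` of the complex are `(0 : Fin 2)`
and `(1 : Fin 2)` respectively, and the symbol `0` is `none`.  The facet `Δ_F` of a total
string `F : Fin n → Fin 2` is the basis chain on `fun j => some (F j)`.  The vertices
`(j, F j)` of each simplex are oriented by their position `j` (in decreasing order, so the
sign attached to deleting position `j` is `(-1)` to the number of support positions after
`j`). -/

/-- A string encoding a face. -/
abbrev Str (n : ℕ) := Fin n → Option (Fin 2)

/-- Simplicial boundary of a single string: the alternating sum of the deletions of the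
support positions. -/
noncomputable def bnd {n : ℕ} (X : Str n) : Str n →₀ ℤ :=
  ∑ j ∈ Finset.univ.filter (fun j => X j ≠ none),
    ((-1 : ℤ) ^ (Finset.univ.filter fun i => j < i ∧ X i ≠ none).card) •
      Finsupp.single (Function.update X j none) 1

/-- The boundary operator on chains. -/
noncomputable def dFull (n : ℕ) : (Str n →₀ ℤ) →ₗ[ℤ] (Str n →₀ ℤ) :=
  Finsupp.lift (Str n →₀ ℤ) ℤ (Str n) bnd

/-- The would-be boundary `[b] = Σ_j (-1)^j Δ_{X^j}` of the removed constant facet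
`(b,…,b)`, where `X^j` equals `b` everywhere except position `j`, where it is `0`. -/
noncomputable def bracket (n : ℕ) (b : Fin 2) : Str n →₀ ℤ :=
  ∑ j : Fin n,
    ((-1 : ℤ) ^ (j : ℕ)) • Finsupp.single (Function.update (fun _ => some b) j none) 1

noncomputable def sgn {n : ℕ} (F : Fin n → Fin 2) : ℤ :=
  (-1 : ℤ) ^ (Finset.univ.filter fun j => F j = 0).card

lemma sgn_prod {n : ℕ} (F : Fin n → Fin 2) :
    sgn F = ∏ i : Fin n, (if F i = 0 then (-1 : ℤ) else 1) := by
  rw [sgn, ← Finset.prod_const, Finset.prod_filter]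

lemma sgn_update {n : ℕ} (F : Fin n → Fin 2) (j : Fin n) :
    sgn (Function.update F j (F j + 1)) = - sgn F := by
  rw [sgn_prod, sgn_prod]
  have h1 : (fun i => if Function.update F j (F j + 1) i = 0 then (-1:ℤ) else 1)
      = Function.update (fun i => if F i = 0 then (-1:ℤ) else 1) j
          (if F j + 1 = 0 then (-1:ℤ) else 1) := by
    funext i
    rcases eq_or_ne i j with rfl | h
    · simp [Function.update]
    · simp [Function.update, h]
  have h2 : (fun i => if F i = 0 then (-1:ℤ) else 1)
      = Function.update (fun i => if F i = 0 then (-1:ℤ) else 1) j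
          (if F j = 0 then (-1:ℤ) else 1) := by
    funext i
    rcases eq_or_ne i j with rfl | h
    · simp [Function.update]
    · simp [Function.update, h]
  rw [h1, Finset.prod_update_of_mem (Finset.mem_univ j)]
  conv_rhs => rw [h2, Finset.prod_update_of_mem (Finset.mem_univ j)]
  have key : ∀ x : Fin 2, (if x + 1 = 0 then (-1:ℤ) else 1) = -(if x = 0 then (-1:ℤ) else 1) := by
    decide
  rw [key]
  ring

lemma bnd_some {n : ℕ} (F : Fin n → Fin 2) :
    bnd (fun i => some (F i)) =
    ∑ j : Fin n, ((-1:ℤ) ^ ((Finset.univ.filter fun i : Fin n => j < i).card)) •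
      Finsupp.single (Function.update (fun i => some (F i)) j none) 1 := by
  unfold bnd; simp

lemma card_gt {n : ℕ} (j : Fin n) :
    (Finset.univ.filter fun i : Fin n => j < i).card = n - 1 - j := by
  rw [show (Finset.univ.filter fun i : Fin n => j < i) = Finset.Ioi j from by ext; simp]
  exact Fin.card_Ioi j

lemma total_zero {n : ℕ} :
    ∑ F : Fin n → Fin 2, sgn F • bnd (fun i => some (F i)) = 0 := by
  simp_rw [bnd_some, Finset.smul_sum]
  rw [Finset.sum_comm]
  refine Finset.sum_eq_zero fun j _ => ?_
  refine Finset.sum_ninvolution (fun F => Function.update F j (F j + 1)) ?_ ?_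
    (fun F => Finset.mem_univ _) ?_
  · intro F
    have harg : Function.update (fun i => some (Function.update F j (F j + 1) i)) j none
        = Function.update (fun i => some (F i)) j none := by
      funext i
      rcases eq_or_ne i j with rfl | h
      · simp
      · simp [Function.update, h]
    rw [harg, sgn_update]
    module
  · intro F _ h
    have := congrFun h j
    simp only [Function.update_self] at this
    exact (by decide : ∀ x : Fin 2, x + 1 ≠ x) _ this
  · intro F
    funext i
    rcases eq_or_ne i j with rfl | h
    · simp only [Function.update_self]
      have : ∀ x : Fin 2, x + 1 + 1 = x := by decide
      exact this _
    · simp [Function.update, h]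

lemma const_filter {n : ℕ} (hn : 0 < n) :
    (Finset.univ.filter (fun F : Fin n → Fin 2 => ¬ ∃ i j, F i ≠ F j))
      = {fun _ => 0, fun _ => 1} := by
  ext F
  simp only [Finset.mem_filter, Finset.mem_univ, true_and, Finset.mem_insert,
    Finset.mem_singleton, not_exists, not_ne_iff]
  constructor
  · intro h
    have hF : F = fun _ => F ⟨0, hn⟩ := by funext i; exact h i ⟨0, hn⟩
    have h0 : F ⟨0, hn⟩ = 0 ∨ F ⟨0, hn⟩ = 1 := by
      have : ∀ x : Fin 2, x = 0 ∨ x = 1 := by decide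
      exact this _
    rcases h0 with h0 | h0
    · left; rw [hF, h0]
    · right; rw [hF, h0]
  · rintro (rfl | rfl) <;> exact fun i j => rfl

/-- In the chain complex of `C_{1,2}`, the boundary of the `(n-1)`-chain `Σ_F sgn(F)·F`,
where `F` ranges over nonconstant total strings over `{1,2}` and `sgn(F) = (-1)^{#1's in F}`,
equals `[1] + (-1)^n [2]`.  (Symbol `1` is `(0 : Fin 2)`, symbol `2` is `(1 : Fin 2)`.) -/
theorem boundary_of_signed_facet_sum (n : ℕ) (hn : 2 ≤ n) :
    dFull n
      (∑ F ∈ Finset.univ.filter (fun F : Fin n → Fin 2 => ∃ i j, F i ≠ F j),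
        ((-1 : ℤ) ^ (Finset.univ.filter fun j => F j = 0).card) •
          Finsupp.single (fun j => some (F j)) 1)
      = bracket n 0 + ((-1 : ℤ) ^ n) • bracket n 1 := by
  have hn0 : 0 < n := by omega
  have hd : ∀ X : Str n, dFull n (Finsupp.single X 1) = bnd X := by
    intro X; simp [dFull]
  -- step 1: express LHS
  have step1 : dFull n
      (∑ F ∈ Finset.univ.filter (fun F : Fin n → Fin 2 => ∃ i j, F i ≠ F j),
        ((-1 : ℤ) ^ (Finset.univ.filter fun j => F j = 0).card) •
          Finsupp.single (fun j => some (F j)) 1)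
      = ∑ F ∈ Finset.univ.filter (fun F : Fin n → Fin 2 => ∃ i j, F i ≠ F j),
          sgn F • bnd (fun i => some (F i)) := by
    rw [map_sum]
    refine Finset.sum_congr rfl fun F _ => ?_
    rw [map_smul, hd]
    rfl
  rw [step1]
  -- step 2: split total sum
  have hsplit := Finset.sum_filter_add_sum_filter_not Finset.univ
    (fun F : Fin n → Fin 2 => ∃ i j, F i ≠ F j)
    (fun F => sgn F • bnd (fun i => some (F i)))
  rw [total_zero] at hsplit
  have step2 : ∑ F ∈ Finset.univ.filter (fun F : Fin n → Fin 2 => ∃ i j, F i ≠ F j),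
      sgn F • bnd (fun i => some (F i))
      = - ∑ F ∈ Finset.univ.filter (fun F : Fin n → Fin 2 => ¬ ∃ i j, F i ≠ F j),
          sgn F • bnd (fun i => some (F i)) := by
    linear_combination (norm := abel) hsplit
  rw [step2, const_filter hn0]
  have hne : (fun _ : Fin n => (0 : Fin 2)) ≠ (fun _ => 1) := by
    intro h
    exact absurd (congrFun h ⟨0, hn0⟩) (by decide)
  rw [Finset.sum_pair hne]
  -- step 3: compute
  have hs0 : sgn (fun _ : Fin n => (0:Fin 2)) = (-1)^n := by
    simp [sgn, Finset.filter_true_of_mem]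
  have hs1 : sgn (fun _ : Fin n => (1:Fin 2)) = 1 := by
    simp [sgn]
  have hcoef : ∀ j : Fin n,
      ((-1:ℤ) ^ ((Finset.univ.filter fun i : Fin n => j < i).card))
        = (-1)^(n-1) * (-1)^(j:ℕ) := by
    intro j
    rw [card_gt]
    have h1 : (n - 1 - (j:ℕ)) + (j:ℕ) = n - 1 := by omega
    have h2 : (-1:ℤ)^(n-1) = (-1)^(n-1-(j:ℕ)) * (-1)^(j:ℕ) := by rw [← pow_add, h1]
    rw [h2, mul_assoc, ← pow_add, Even.neg_one_pow ⟨(j:ℕ), rfl⟩, mul_one]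
  have hpow : (-1:ℤ)^n * (-1)^(n-1) = -1 := by
    rw [← pow_add]
    exact Odd.neg_one_pow ⟨n - 1, by omega⟩
  rw [hs0, hs1, bnd_some, bnd_some, one_smul, Finset.smul_sum, bracket, bracket,
    Finset.smul_sum, neg_add, ← Finset.sum_neg_distrib, ← Finset.sum_neg_distrib]
  congr 1
  · refine Finset.sum_congr rfl fun j _ => ?_
    rw [hcoef j, smul_smul, ← mul_assoc, hpow, neg_one_mul, neg_smul, neg_neg]
  · refine Finset.sum_congr rfl fun j _ => ?_
    have hn' : (-1:ℤ)^n = -((-1)^(n-1)) := by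
      conv_lhs => rw [show n = (n-1)+1 from by omega]
      rw [pow_succ]; ring
    rw [hcoef j, hn', smul_smul, neg_mul, neg_smul]
end

section
/- The number of facets of the polyhedral decomposition of the space of 4 labeled points on a tropical line in TP^3 (the complex T_{4,4}) is 3·(5^4 - 2·3^4 + 1) = 1392. -/
open Finset

lemma mem234 : ∀ x : Fin 5, (x ∈ ({2,3,4} : Finset (Fin 5)) ↔ ¬x = 0 ∧ ¬x = 1) := by decide
lemma mem014 : ∀ x : Fin 5, (x ∈ ({0,1,4} : Finset (Fin 5)) ↔ ¬x = 2 ∧ ¬x = 3) := by decide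
lemma mem4 : ∀ x : Fin 5, (x ∈ ({4} : Finset (Fin 5)) ↔ (¬x = 0 ∧ ¬x = 1) ∧ (¬x = 2 ∧ ¬x = 3)) := by decide

lemma piA : (Finset.univ.filter fun f : Fin 4 → Fin 5 => ¬ ∃ j, f j = 0 ∨ f j = 1)
    = Fintype.piFinset (fun _ : Fin 4 => ({2,3,4} : Finset (Fin 5))) := by
  ext f
  simp only [mem_filter, mem_univ, true_and, Fintype.mem_piFinset, not_exists, not_or, mem234]

lemma piB : (Finset.univ.filter fun f : Fin 4 → Fin 5 => ¬ ∃ j, f j = 2 ∨ f j = 3)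
    = Fintype.piFinset (fun _ : Fin 4 => ({0,1,4} : Finset (Fin 5))) := by
  ext f
  simp only [mem_filter, mem_univ, true_and, Fintype.mem_piFinset, not_exists, not_or, mem014]

lemma piAB : (Finset.univ.filter fun f : Fin 4 → Fin 5 =>
      (¬ ∃ j, f j = 0 ∨ f j = 1) ∧ ¬ ∃ j, f j = 2 ∨ f j = 3)
    = Fintype.piFinset (fun _ : Fin 4 => ({4} : Finset (Fin 5))) := by
  ext f
  simp only [mem_filter, mem_univ, true_and, Fintype.mem_piFinset, not_exists, not_or, mem4,
    forall_and]

lemma aux : (Finset.univ.filter fun f : Fin 4 → Fin 5 =>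
    (∃ j, f j = 0 ∨ f j = 1) ∧ (∃ j, f j = 2 ∨ f j = 3)).card = 464 := by
  classical
  have htot := Finset.card_filter_add_card_filter_not
    (s := (Finset.univ : Finset (Fin 4 → Fin 5)))
    (p := fun f => (∃ j, f j = 0 ∨ f j = 1) ∧ (∃ j, f j = 2 ∨ f j = 3))
  have hneg : (Finset.univ.filter fun f : Fin 4 → Fin 5 =>
        ¬ ((∃ j, f j = 0 ∨ f j = 1) ∧ (∃ j, f j = 2 ∨ f j = 3)))
      = (Finset.univ.filter fun f : Fin 4 → Fin 5 => ¬ ∃ j, f j = 0 ∨ f j = 1)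
        ∪ (Finset.univ.filter fun f : Fin 4 → Fin 5 => ¬ ∃ j, f j = 2 ∨ f j = 3) := by
    rw [← Finset.filter_or]
    apply Finset.filter_congr
    intro f _
    rw [not_and_or]
  have hinter : ((Finset.univ.filter fun f : Fin 4 → Fin 5 => ¬ ∃ j, f j = 0 ∨ f j = 1)
        ∩ (Finset.univ.filter fun f : Fin 4 → Fin 5 => ¬ ∃ j, f j = 2 ∨ f j = 3))
      = (Finset.univ.filter fun f : Fin 4 → Fin 5 =>
          (¬ ∃ j, f j = 0 ∨ f j = 1) ∧ ¬ ∃ j, f j = 2 ∨ f j = 3) := by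
    rw [Finset.filter_and]
  have hA : (Finset.univ.filter fun f : Fin 4 → Fin 5 => ¬ ∃ j, f j = 0 ∨ f j = 1).card = 81 := by
    rw [piA, Fintype.card_piFinset]; decide
  have hB : (Finset.univ.filter fun f : Fin 4 → Fin 5 => ¬ ∃ j, f j = 2 ∨ f j = 3).card = 81 := by
    rw [piB, Fintype.card_piFinset]; decide
  have hAB : (Finset.univ.filter fun f : Fin 4 → Fin 5 =>
      (¬ ∃ j, f j = 0 ∨ f j = 1) ∧ ¬ ∃ j, f j = 2 ∨ f j = 3).card = 1 := by
    rw [piAB, Fintype.card_piFinset]; decide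
  have hunion := Finset.card_union_add_card_inter
    (Finset.univ.filter fun f : Fin 4 → Fin 5 => ¬ ∃ j, f j = 0 ∨ f j = 1)
    (Finset.univ.filter fun f : Fin 4 → Fin 5 => ¬ ∃ j, f j = 2 ∨ f j = 3)
  rw [hinter, hA, hB, hAB] at hunion
  have huniv : (Finset.univ : Finset (Fin 4 → Fin 5)).card = 625 := by
    simp [Fintype.card_fun]
  have hcard := congrArg Finset.card hneg
  have htot' : (Finset.univ.filter fun f : Fin 4 → Fin 5 =>
        (∃ j, f j = 0 ∨ f j = 1) ∧ (∃ j, f j = 2 ∨ f j = 3)).card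
      + (Finset.univ.filter fun f : Fin 4 → Fin 5 =>
        ¬ ((∃ j, f j = 0 ∨ f j = 1) ∧ (∃ j, f j = 2 ∨ f j = 3))).card = 625 := by
    rw [← huniv]; exact htot
  clear htot hneg hinter hA hB hAB huniv
  generalize (Finset.univ.filter fun f : Fin 4 → Fin 5 =>
        (∃ j, f j = 0 ∨ f j = 1) ∧ (∃ j, f j = 2 ∨ f j = 3)).card = x at htot' ⊢
  generalize (Finset.univ.filter fun f : Fin 4 → Fin 5 =>
        ¬ ((∃ j, f j = 0 ∨ f j = 1) ∧ (∃ j, f j = 2 ∨ f j = 3))).card = n at htot' hcard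
  generalize ((Finset.univ.filter fun f : Fin 4 → Fin 5 => ¬ ∃ j, f j = 0 ∨ f j = 1)
        ∪ (Finset.univ.filter fun f : Fin 4 → Fin 5 => ¬ ∃ j, f j = 2 ∨ f j = 3)).card = u at hcard hunion
  omega

/-- Facets of the polyhedral decomposition of `T_{4,4}`: a facet is a choice of one of the
3 trivalent trees with 4 labeled leaves together with a placement of each of the 4 labeled
points on one of the 5 segments (segments `0,1` are the two leaves on one side of the
interior edge, segments `2,3` the two leaves on the other side, and segment `4` the
interior edge), subject to the condition that on each side of the interior edge at least
one of the two leaves carries a point.  The number of facets is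
`3·(5^4 − 2·3^4 + 1) = 1392`. -/
theorem card_facets_T44 :
    (Finset.univ.filter fun p : Fin 3 × (Fin 4 → Fin 5) =>
        (∃ j, p.2 j = 0 ∨ p.2 j = 1) ∧ (∃ j, p.2 j = 2 ∨ p.2 j = 3)).card = 1392 ∧
    3 * (5 ^ 4 - 2 * 3 ^ 4 + 1) = 1392 := by
  refine ⟨?_, by norm_num⟩
  classical
  have hprod : (Finset.univ.filter fun p : Fin 3 × (Fin 4 → Fin 5) =>
        (∃ j, p.2 j = 0 ∨ p.2 j = 1) ∧ (∃ j, p.2 j = 2 ∨ p.2 j = 3))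
      = (Finset.univ : Finset (Fin 3)) ×ˢ (Finset.univ.filter fun f : Fin 4 → Fin 5 =>
        (∃ j, f j = 0 ∨ f j = 1) ∧ (∃ j, f j = 2 ∨ f j = 3)) := by
    ext p
    simp [Finset.mem_product]
  rw [hprod, Finset.card_product, aux]
  simp
end
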